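/- For f(x) = exp(-a/x) with a > 0, the one-shot game SINR condition x f'(x) = f(x) gives β* = a, and the operating point SINR γ̃ = a/(1+(K-1)a) satisfies γ̃ < β* for K ≥ 2. Consequently the operating-point power p̃_i = (σ²/η_i)·γ̃/(1-(K-1)γ̃) = (σ²/η_i)·a is strictly smaller than the Nash power p_i* = (σ²/η_i)·a/(1-(K-1)a), provided (K-1)a < 1. -/

import Mathlib

lemma deriv_expneg (a : ℝ) (f : ℝ → ℝ) (hf : ∀ x, f x = Real.exp (-a / x))
    {x : ℝ} (hx : x ≠ 0) : deriv f x = f x * (a / x ^ 2) := by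
  have hfe : f = fun x => Real.exp (-a / x) := funext hf
  have h1 : HasDerivAt (fun x : ℝ => -a / x) (a / x ^ 2) x := by
    have h := (hasDerivAt_inv hx).const_mul (-a)
    have he : (fun x : ℝ => -a * x⁻¹) = fun x : ℝ => -a / x := by funext y; ring
    rw [he] at h
    exact h.congr_deriv (by ring)
  have h2 := h1.exp
  rw [hfe, h2.deriv]

/-- with f(x)=exp(-a/x), the Nash SINR is β* = a, the operating SINR is
γ̃ = a/(1+(K-1)a) < β* for K ≥ 2, and the operating powers p̃_i = (σ²/η_i)a are strictly
smaller than the Nash powers p_i* = (σ²/η_i)a/(1-(K-1)a) when (K-1)a < 1. -/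
theorem operating_point_dominates_in_power (a : ℝ) (ha : 0 < a) (K : ℕ) (hK : 2 ≤ K)
    (haK : ((K : ℝ) - 1) * a < 1)
    (η : Fin K → ℝ) (hη : ∀ i, 0 < η i) (σ2 : ℝ) (hσ : 0 < σ2)
    (f : ℝ → ℝ) (hf : ∀ x, f x = Real.exp (-a / x))
    (β γ : ℝ)
    (hβ : 0 < β ∧ β * deriv f β = f β)
    (hγ : γ ∈ Set.Ioo 0 (1 / ((K : ℝ) - 1)) ∧
      γ * (1 - ((K : ℝ) - 1) * γ) * deriv f γ = f γ)
    (pstar ptilde : Fin K → ℝ)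
    (hpstar : ∀ i, pstar i = (σ2 / η i) * (β / (1 - ((K : ℝ) - 1) * β)))
    (hptilde : ∀ i, ptilde i = (σ2 / η i) * (γ / (1 - ((K : ℝ) - 1) * γ))) :
    β = a ∧ γ = a / (1 + ((K : ℝ) - 1) * a) ∧ γ < β ∧
    (∀ i, ptilde i = (σ2 / η i) * a) ∧
    (∀ i, pstar i = (σ2 / η i) * (a / (1 - ((K : ℝ) - 1) * a))) ∧
    (∀ i, ptilde i < pstar i) := by
  obtain ⟨hβ0, hβeq⟩ := hβ
  obtain ⟨⟨hγ0, hγlt⟩, hγeq⟩ := hγ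
  have hK1 : (1 : ℝ) ≤ (K : ℝ) - 1 := by
    have : (2 : ℝ) ≤ (K : ℝ) := by exact_mod_cast hK
    linarith
  have hfpos : ∀ x, 0 < f x := fun x => by rw [hf]; exact Real.exp_pos _
  -- β = a
  have hβa : β = a := by
    have hd := deriv_expneg a f hf hβ0.ne'
    rw [hd] at hβeq
    have h2 : β * (a / β ^ 2) = 1 := by
      have key : (β * (a / β ^ 2)) * f β = 1 * f β := by
        rw [one_mul]; linear_combination hβeq
      exact mul_right_cancel₀ (hfpos β).ne' key
    field_simp at h2
    nlinarith [sq_nonneg β]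
  -- γ equation
  have hγa : γ = a / (1 + ((K : ℝ) - 1) * a) := by
    have hd := deriv_expneg a f hf hγ0.ne'
    rw [hd] at hγeq
    have h2 : γ * (1 - ((K : ℝ) - 1) * γ) * (a / γ ^ 2) = 1 := by
      have key : γ * (1 - ((K : ℝ) - 1) * γ) * (a / γ ^ 2) * f γ = 1 * f γ := by
        calc γ * (1 - ((K : ℝ) - 1) * γ) * (a / γ ^ 2) * f γ
            = γ * (1 - ((K : ℝ) - 1) * γ) * (f γ * (a / γ ^ 2)) := by ring
          _ = f γ := hγeq
          _ = 1 * f γ := (one_mul _).symm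
      exact mul_right_cancel₀ (hfpos γ).ne' key
    have hγ2 : γ ^ 2 ≠ 0 := pow_ne_zero _ hγ0.ne'
    have h3 : (1 - ((K : ℝ) - 1) * γ) * a = γ := by
      field_simp at h2
      nlinarith [sq_nonneg γ]
    have hden : 0 < 1 + ((K : ℝ) - 1) * a := by nlinarith
    field_simp
    linarith [h3]
  have hden : 0 < 1 + ((K : ℝ) - 1) * a := by nlinarith
  have hγlta : γ < a := by
    rw [hγa]
    rw [div_lt_iff₀ hden]
    nlinarith [mul_pos (show (0:ℝ) < (K:ℝ) - 1 by linarith) ha]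
  refine ⟨hβa, hγa, by rw [hβa]; exact hγlta, ?_, ?_, ?_⟩
  · intro i
    rw [hptilde i, hγa]
    have h1 : 1 - ((K:ℝ)-1) * (a / (1 + ((K : ℝ) - 1) * a)) = 1 / (1 + ((K : ℝ) - 1) * a) := by
      field_simp
      ring
    rw [h1]
    field_simp
  · intro i; rw [hpstar i, hβa]
  · intro i
    rw [hptilde i, hpstar i, hβa, hγa]
    have hηi := hη i
    have hpos : 0 < σ2 / η i := div_pos hσ hηi
    apply mul_lt_mul_of_pos_left _ hpos
    have h1 : 1 - ((K:ℝ)-1) * (a / (1 + ((K : ℝ) - 1) * a)) = 1 / (1 + ((K : ℝ) - 1) * a) := by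
      field_simp
      ring
    rw [h1]
    have h1a : 0 < 1 - ((K : ℝ) - 1) * a := by linarith
    have hsimp : a / (1 + ((K : ℝ) - 1) * a) / (1 / (1 + ((K : ℝ) - 1) * a)) = a := by
      field_simp
    rw [hsimp, lt_div_iff₀ h1a]
    nlinarith [mul_pos (show (0:ℝ) < (K:ℝ) - 1 by linarith) ha]
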